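/- Let X and Y be metric simplicial/polyhedral 2-complexes realized as topological spaces, Z a common subcomplex, and suppose at a glued vertex v the link satisfies Lk(v, X ⊔_Z Y) = Lk(v,X) ⊔_{Lk(v,Z)} Lk(v,Y) where Lk(v,Z) is a discrete set of points any two of which are at distance ≥ 2π in Lk(v,X). Then every loop in the glued link Lk(v, X ⊔_Z Y) has length ≥ 2π, provided every loop in Lk(v,X) and in Lk(v,Y) has length ≥ 2π. (Graph-theoretic version: if A and B are metric graphs glued along a finite vertex set P, every cycle in A and in B has length ≥ 2π, and any two points of P are at distance ≥ 2π in A, then every cycle in the glued graph has length ≥ 2π.) -/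

import Mathlib

open Real

namespace UltraGlueAux

open SimpleGraph SimpleGraph.Walk

variable {V : Type*}

/-- The last edge of a non-nil walk joins some vertex to the endpoint. -/
lemma exists_last_edge {G : SimpleGraph V} :
    ∀ {a b : V} (w : G.Walk a b), ¬ w.Nil →
      ∃ c, G.Adj c b ∧ w.edges.getLast? = some s(c, b) := by
  intro a b w
  induction w with
  | nil => intro h; simp at h
  | @cons u x y h q ih =>
    intro _
    cases q with
    | nil => exact ⟨u, h, by simp⟩
    | cons h' q' =>
      obtain ⟨c, hc, hl⟩ := ih (by simp)
      exact ⟨c, hc, by simpa using hl⟩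

/-- The endpoint of a non-nil walk lies in the tail of its support. -/
lemma end_mem_tail_support {G : SimpleGraph V} :
    ∀ {a b : V} (w : G.Walk a b), ¬ w.Nil → b ∈ w.support.tail := by
  intro a b w hw
  cases w with
  | nil => simp at hw
  | cons h q => simpa using q.end_mem_support

/-- Rotating a cycle by one step. -/
lemma rot1 {G : SimpleGraph V} {v x : V} (h : G.Adj v x) (q : G.Walk x v)
    (hc : (Walk.cons h q).IsCycle) :
    (q.concat h).IsCycle ∧ (q.concat h).edges = q.edges ++ [s(v, x)] := by
  have hedges : (q.concat h).edges = q.edges ++ [s(v, x)] := by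
    simpa [List.concat_eq_append] using q.edges_concat h
  rw [Walk.isCycle_def] at hc ⊢
  obtain ⟨htrail, hne, hnodup⟩ := hc
  refine ⟨⟨?_, ?_, ?_⟩, hedges⟩
  · rw [Walk.isTrail_def, hedges]
    refine (List.perm_append_singleton _ _).symm.nodup ?_
    simpa [Walk.isTrail_def] using htrail
  · intro hnil
    have : (q.concat h).edges = [] := by rw [hnil]; simp
    simp [hedges] at this
  · have hsup : (q.concat h).support = q.support ++ [x] := by
      simpa [List.concat_eq_append] using q.support_concat h
    have hq : q.support = x :: q.support.tail := q.support_eq_cons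
    have htail : (q.concat h).support.tail = q.support.tail ++ [x] := by
      rw [hsup, hq]; simp
    rw [htail]
    refine (List.perm_append_singleton _ _).symm.nodup ?_
    have : (Walk.cons h q).support.tail = q.support := by simp
    rw [this, hq] at hnodup
    exact hnodup

/-- Any rotation of a cycle is a cycle with rotated edge list. -/
lemma rotate_cycle {G : SimpleGraph V} :
    ∀ (k : ℕ) {v : V} (w : G.Walk v v), w.IsCycle →
      ∃ (u : V) (w' : G.Walk u u), w'.IsCycle ∧ w'.edges = w.edges.rotate k := by
  intro k
  induction k with
  | zero => intro v w hc; exact ⟨v, w, hc, by simp⟩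
  | succ k ih =>
    intro v w hc
    cases w with
    | nil => exact absurd rfl ((Walk.isCycle_def _).mp hc).2.1
    | @cons _ x _ h q =>
      obtain ⟨hc1, he1⟩ := rot1 h q hc
      obtain ⟨u, w', hw', he'⟩ := ih (q.concat h) hc1
      refine ⟨u, w', hw', ?_⟩
      rw [he', he1]
      have : (Walk.cons h q).edges.rotate 1 = q.edges ++ [s(v, x)] := by
        simp [List.rotate_cons_succ]
      rw [← this, List.rotate_rotate]
      congr 1
      omega

/-- Key list decomposition: a list containing both a `p` element and a `¬ p`
element either already has a `p` head and `¬ p` last, or contains an adjacent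
pair `(¬ p, p)`. -/
lemma list_decomp {α : Type*} (p : α → Prop) :
    ∀ (l : List α), (∃ a ∈ l, p a) → (∃ b ∈ l, ¬ p b) →
      (∃ l₁ b a l₂, l = l₁ ++ b :: a :: l₂ ∧ ¬ p b ∧ p a) ∨
      (∃ e1 e2, l.head? = some e1 ∧ p e1 ∧ l.getLast? = some e2 ∧ ¬ p e2) := by
  intro l
  induction l with
  | nil => rintro ⟨a, ha, -⟩; simp at ha
  | cons x xs ih =>
    rintro ⟨a, ha, hpa⟩ ⟨b, hb, hpb⟩
    by_cases hx : p x
    · -- head satisfies p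
      have hbxs : b ∈ xs := by
        rcases List.mem_cons.mp hb with h | h
        · exact absurd (h ▸ hx) hpb
        · exact h
      by_cases hxs : ∃ a' ∈ xs, p a'
      · rcases ih hxs ⟨b, hbxs, hpb⟩ with ⟨l₁, b', a', l₂, heq, h1, h2⟩ | ⟨e1, e2, h1, h2, h3, h4⟩
        · exact Or.inl ⟨x :: l₁, b', a', l₂, by rw [heq]; rfl, h1, h2⟩
        · refine Or.inr ⟨x, e2, rfl, hx, ?_, h4⟩
          cases xs with
          | nil => simp at hbxs
          | cons y ys => rw [List.getLast?_cons_cons]; exact h3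
      · -- all of xs fail p; xs nonempty since b ∈ xs
        push_neg at hxs
        have hne : xs ≠ [] := List.ne_nil_of_mem hbxs
        refine Or.inr ⟨x, xs.getLast hne, rfl, hx, ?_, hxs _ (List.getLast_mem hne)⟩
        cases xs with
        | nil => exact absurd rfl hne
        | cons y ys =>
          rw [List.getLast?_cons_cons, List.getLast?_eq_getLast (by simp)]
    · -- head fails p; then a ∈ xs
      have haxs : a ∈ xs := by
        rcases List.mem_cons.mp ha with h | h
        · exact absurd (h ▸ hpa) hx
        · exact h
      cases xs with
      | nil => simp at haxs
      | cons y ys =>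
        by_cases hy : p y
        · exact Or.inl ⟨[], x, y, ys, rfl, hx, hy⟩
        · rcases ih ⟨a, haxs, hpa⟩ ⟨y, by simp, hy⟩ with
            ⟨l₁, b', a', l₂, heq, h1, h2⟩ | ⟨e1, e2, h1, h2, h3, h4⟩
          · exact Or.inl ⟨x :: l₁, b', a', l₂, by rw [heq]; rfl, h1, h2⟩
          · simp only [List.head?_cons, Option.some.injEq] at h1
            exact absurd (h1 ▸ hy) (h1 ▸ fun hh => hy (h1 ▸ h2))

/-- From the decomposition, produce a rotation whose head satisfies `p` and whose
last element fails `p`. -/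
lemma exists_good_rotation {α : Type*} (p : α → Prop) (l : List α)
    (ha : ∃ a ∈ l, p a) (hb : ∃ b ∈ l, ¬ p b) :
    ∃ k e1 e2, (l.rotate k).head? = some e1 ∧ p e1 ∧
      (l.rotate k).getLast? = some e2 ∧ ¬ p e2 := by
  rcases list_decomp p l ha hb with ⟨l₁, b, a, l₂, heq, hpb, hpa⟩ | ⟨e1, e2, h1, h2, h3, h4⟩
  · refine ⟨l₁.length + 1, a, b, ?_, hpa, ?_, hpb⟩
    · have hrot : l.rotate (l₁.length + 1) = (a :: l₂) ++ (l₁ ++ [b]) := by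
        have h1 : l = (l₁ ++ [b]) ++ (a :: l₂) := by rw [heq]; simp
        have h2 : l₁.length + 1 = (l₁ ++ [b]).length := by simp
        rw [h1, h2, List.rotate_append_length_eq]
      rw [hrot]; rfl
    · have hrot : l.rotate (l₁.length + 1) = (a :: l₂) ++ (l₁ ++ [b]) := by
        have h1 : l = (l₁ ++ [b]) ++ (a :: l₂) := by rw [heq]; simp
        have h2 : l₁.length + 1 = (l₁ ++ [b]).length := by simp
        rw [h1, h2, List.rotate_append_length_eq]
      rw [hrot, ← List.append_assoc]
      exact List.getLast?_concat
  · exact ⟨0, e1, e2, by simpa using h1, h2, by simpa using h3, h4⟩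

/-- Splitting off the maximal initial run of edges lying in a set `S`. -/
lemma split {G : SimpleGraph V} (S : Set (Sym2 V)) :
    ∀ {x y : V} (w : G.Walk x y) {u : V} (h : G.Adj u x), s(u, x) ∈ S →
      ∃ (q : V) (w₁ : G.Walk u q) (w₂ : G.Walk q y),
        Walk.cons h w = w₁.append w₂ ∧ (∀ e ∈ w₁.edges, e ∈ S) ∧ ¬ w₁.Nil ∧
        (w₂.Nil ∨ ∃ (z : V) (h2 : G.Adj q z) (w3 : G.Walk z y),
          w₂ = Walk.cons h2 w3 ∧ s(q, z) ∉ S) := by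
  intro x y w
  induction w with
  | @nil x =>
    intro u h hS
    exact ⟨x, Walk.cons h Walk.nil, Walk.nil, by simp, by simpa using hS,
      Walk.not_nil_cons, Or.inl Walk.nil_nil⟩
  | @cons x z y h' w' ih =>
    intro u h hS
    by_cases hxz : s(x, z) ∈ S
    · obtain ⟨q, w₁, w₂, heq, hSall, hnn, hlast⟩ := ih h' hxz
      refine ⟨q, Walk.cons h w₁, w₂, ?_, ?_, Walk.not_nil_cons, hlast⟩
      · rw [Walk.cons_append, ← heq]
      · intro e he
        rcases List.mem_cons.mp (by simpa using he) with h1 | h1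
        · exact h1 ▸ hS
        · exact hSall e h1
    · exact ⟨x, Walk.cons h Walk.nil, Walk.cons h' w', by simp, by simpa using hS,
        Walk.not_nil_cons, Or.inr ⟨z, h', w', rfl, hxz⟩⟩

end UltraGlueAux

open Real UltraGlueAux SimpleGraph Classical in
/-- The key case: a cycle in the glued graph whose first edge is in `GA` and whose
last edge is not. -/
lemma glued_good_case {V : Type*} (GA GB : SimpleGraph V)
    (ℓA ℓB : Sym2 V → ℝ) (P : Set V)
    (hposA : ∀ e ∈ GA.edgeSet, 0 < ℓA e)
    (hposB : ∀ e ∈ GB.edgeSet, 0 < ℓB e)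
    (hglue : GA.support ∩ GB.support ⊆ P)
    (hultra : ∀ p ∈ P, ∀ q ∈ P, p ≠ q →
      ∀ w : GA.Walk p q, 2 * π ≤ (w.edges.map ℓA).sum)
    {u : V} (w : (GA ⊔ GB).Walk u u) (hc : w.IsCycle)
    {e1 e2 : Sym2 V} (h1 : w.edges.head? = some e1) (hA1 : e1 ∈ GA.edgeSet)
    (h2 : w.edges.getLast? = some e2) (hB2 : e2 ∉ GA.edgeSet) :
    2 * π ≤ (w.edges.map (fun e => if e ∈ GA.edgeSet then ℓA e else ℓB e)).sum := by
  classical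
  cases w with
  | nil => simp at h1
  | @cons _ x _ h q =>
    have he1 : e1 = s(u, x) := by
      simp only [Walk.edges_cons, List.head?_cons, Option.some.injEq] at h1
      exact h1.symm
    have hux : s(u, x) ∈ GA.edgeSet := he1 ▸ hA1
    obtain ⟨qv, w₁, w₂, heq, hall, hnn, hlast⟩ := split GA.edgeSet q h hux
    have hedges : (Walk.cons h q).edges = w₁.edges ++ w₂.edges := by
      rw [heq, Walk.edges_append]
    rcases hlast with hnil2 | ⟨z, h2z, w3, hw2, hznot⟩
    · -- w₂ is nil: all edges in GA, contradicting the last edge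
      exfalso
      have hlen : w₂.edges = [] := by
        have := (Walk.nil_iff_length_eq).mp hnil2
        have hl := w₂.length_edges
        rw [this] at hl
        exact List.length_eq_zero_iff.mp hl
      have he2mem : e2 ∈ (Walk.cons h q).edges := List.mem_of_getLast? h2
      rw [hedges, hlen, List.append_nil] at he2mem
      exact hB2 (hall e2 he2mem)
    · -- w₂ starts with an edge not in GA
      -- u ∈ P
      obtain ⟨c, hcadj, hlastedge⟩ := exists_last_edge (Walk.cons h q) Walk.not_nil_cons
      have he2 : e2 = s(c, u) := by rw [hlastedge] at h2; exact (Option.some.injEq _ _ ▸ h2).symm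
      have he2B : e2 ∈ GB.edgeSet := by
        have hmem : e2 ∈ (Walk.cons h q).edges := List.mem_of_getLast? h2
        have := (Walk.cons h q).edges_subset_edgeSet hmem
        rw [SimpleGraph.edgeSet_sup] at this
        exact this.resolve_left hB2
      have huP : u ∈ P := by
        refine hglue ⟨(SimpleGraph.mem_support _).mpr ⟨x, (SimpleGraph.mem_edgeSet _).mp hux⟩, ?_⟩
        have : GB.Adj c u := (SimpleGraph.mem_edgeSet _).mp (he2 ▸ he2B)
        exact (SimpleGraph.mem_support _).mpr ⟨c, this.symm⟩
      -- qv ∈ P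
      obtain ⟨c', hc'adj, hl'⟩ := exists_last_edge w₁ hnn
      have hc'A : s(c', qv) ∈ GA.edgeSet := hall _ (List.mem_of_getLast? hl')
      have hqzB : s(qv, z) ∈ GB.edgeSet := by
        have hmem : s(qv, z) ∈ (Walk.cons h q).edges := by
          rw [hedges, hw2]
          simp
        have := (Walk.cons h q).edges_subset_edgeSet hmem
        rw [SimpleGraph.edgeSet_sup] at this
        exact this.resolve_left hznot
      have hqP : qv ∈ P := by
        refine hglue ⟨?_, ?_⟩
        · exact (SimpleGraph.mem_support _).mpr ⟨c', ((SimpleGraph.mem_edgeSet _).mp hc'A).symm⟩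
        · exact (SimpleGraph.mem_support _).mpr ⟨z, (SimpleGraph.mem_edgeSet _).mp hqzB⟩
      -- u ≠ qv
      have htail : (Walk.cons h q).support.tail = w₁.support.tail ++ w₂.support.tail := by
        rw [heq, Walk.support_append, w₁.support_eq_cons]
        simp
      have hnd : ((Walk.cons h q).support.tail).Nodup :=
        ((Walk.isCycle_def _).mp hc).2.2
      rw [htail] at hnd
      have hdisj := List.disjoint_of_nodup_append hnd
      have hne : u ≠ qv := by
        intro huq
        subst huq
        exact hdisj (end_mem_tail_support w₁ hnn)
          (end_mem_tail_support w₂ (by rw [hw2]; exact Walk.not_nil_cons))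
      -- transfer w₁ to GA and apply hultra
      have tA : GA.Walk u qv := w₁.transfer GA hall
      have hbound : 2 * π ≤ (w₁.edges.map ℓA).sum := by
        have := hultra u huP qv hqP hne (w₁.transfer GA hall)
        rwa [Walk.edges_transfer] at this
      have hmapA : w₁.edges.map (fun e => if e ∈ GA.edgeSet then ℓA e else ℓB e)
          = w₁.edges.map ℓA := by
        apply List.map_congr_left
        intro e he
        simp [hall e he]
      have hnonneg : 0 ≤ (w₂.edges.map (fun e => if e ∈ GA.edgeSet then ℓA e else ℓB e)).sum := by
        apply List.sum_nonneg
        intro r hr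
        obtain ⟨e, he, rfl⟩ := List.mem_map.mp hr
        have hmem : e ∈ (Walk.cons h q).edges := by rw [hedges]; exact List.mem_append_right _ he
        have hee := (Walk.cons h q).edges_subset_edgeSet hmem
        rw [SimpleGraph.edgeSet_sup] at hee
        by_cases heA : e ∈ GA.edgeSet
        · simp only [heA, if_true]
          exact (hposA e heA).le
        · simp only [heA, if_false]
          exact (hposB e (hee.resolve_left heA)).le
      rw [hedges, List.map_append, List.sum_append]
      have := hmapA ▸ hbound
      linarith

open Real

open Classical in
/-- Ultra-convex gluing, graph-theoretic version: let `A`, `B` be metric graphs on a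
common vertex type, glued along a finite vertex set `P` (their common vertices all
lie in `P`, and they share no edges). If every cycle in `A` and in `B` has length
at least `2π`, and any two distinct points of `P` are at distance at least `2π` in
`A` (every walk between them has length `≥ 2π`), then every cycle in the glued
graph `A ⊔ B` has length at least `2π`. -/
theorem glued_graph_large_girth {V : Type*} (GA GB : SimpleGraph V)
    (ℓA ℓB : Sym2 V → ℝ) (P : Set V) (hPfin : P.Finite)
    (hposA : ∀ e ∈ GA.edgeSet, 0 < ℓA e)
    (hposB : ∀ e ∈ GB.edgeSet, 0 < ℓB e)
    (hedisj : GA.edgeSet ∩ GB.edgeSet = ∅)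
    (hglue : GA.support ∩ GB.support ⊆ P)
    (hcycA : ∀ (v : V) (w : GA.Walk v v), w.IsCycle → 2 * π ≤ (w.edges.map ℓA).sum)
    (hcycB : ∀ (v : V) (w : GB.Walk v v), w.IsCycle → 2 * π ≤ (w.edges.map ℓB).sum)
    (hultra : ∀ p ∈ P, ∀ q ∈ P, p ≠ q →
      ∀ w : GA.Walk p q, 2 * π ≤ (w.edges.map ℓA).sum) :
    ∀ (v : V) (w : (GA ⊔ GB).Walk v v), w.IsCycle →
      2 * π ≤ (w.edges.map (fun e => if e ∈ GA.edgeSet then ℓA e else ℓB e)).sum := by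
  intro v w hc
  by_cases hA : ∀ e ∈ w.edges, e ∈ GA.edgeSet
  · -- all edges in GA
    have hcA := hc.transfer hA
    have hb := hcycA v (w.transfer GA hA) hcA
    rw [SimpleGraph.Walk.edges_transfer] at hb
    have hmap : w.edges.map (fun e => if e ∈ GA.edgeSet then ℓA e else ℓB e)
        = w.edges.map ℓA := by
      apply List.map_congr_left
      intro e he
      simp [hA e he]
    rw [hmap]
    exact hb
  · by_cases hB : ∀ e ∈ w.edges, e ∈ GB.edgeSet
    · -- all edges in GB
      have hcB := hc.transfer hB
      have hb := hcycB v (w.transfer GB hB) hcB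
      rw [SimpleGraph.Walk.edges_transfer] at hb
      have hmap : w.edges.map (fun e => if e ∈ GA.edgeSet then ℓA e else ℓB e)
          = w.edges.map ℓB := by
        apply List.map_congr_left
        intro e he
        have heB := hB e he
        have heA : e ∉ GA.edgeSet := by
          intro hA'
          have : e ∈ GA.edgeSet ∩ GB.edgeSet := ⟨hA', heB⟩
          rw [hedisj] at this
          exact this
        simp [heA]
      rw [hmap]
      exact hb
    · -- mixed case
      push_neg at hA hB
      obtain ⟨eb, hebmem, hebA⟩ := hA
      obtain ⟨ea, heamem, heaB⟩ := hB
      have heaA : ea ∈ GA.edgeSet := by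
        have := w.edges_subset_edgeSet heamem
        rw [SimpleGraph.edgeSet_sup] at this
        exact this.resolve_right heaB
      obtain ⟨k, e1, e2, hh, he1A, hl, he2A⟩ :=
        UltraGlueAux.exists_good_rotation (fun e => e ∈ GA.edgeSet) w.edges
          ⟨ea, heamem, heaA⟩ ⟨eb, hebmem, hebA⟩
      obtain ⟨u, w', hw'c, hw'e⟩ := UltraGlueAux.rotate_cycle k w hc
      have hgood := glued_good_case GA GB ℓA ℓB P hposA hposB hglue hultra w' hw'c
        (by rw [hw'e]; exact hh) he1A (by rw [hw'e]; exact hl) he2A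
      have hperm : w'.edges.Perm w.edges := by
        rw [hw'e]; exact List.rotate_perm w.edges k
      calc 2 * π ≤ (w'.edges.map (fun e => if e ∈ GA.edgeSet then ℓA e else ℓB e)).sum := hgood
        _ = (w.edges.map (fun e => if e ∈ GA.edgeSet then ℓA e else ℓB e)).sum :=
          (hperm.map _).sum_eq
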